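/- Let Ωᵢ = B̄(ωᵢ; rᵢ) (rᵢ ≥ 0) be closed balls with empty intersection in a Hilbert space X and let x̄ be the unique minimizer of D(x) = max_i d(x, Ωᵢ). Then x̄ lies in the convex hull of the centers of the active balls: x̄ ∈ conv{ωᵢ : i ∈ I(x̄)}, where I(x̄) = {i : d(x̄, Ωᵢ) = D(x̄)}. -/

import Mathlib

open Metric
open scoped RealInnerProductSpace

lemma infDist_closedBall_eq {X : Type*} [NormedAddCommGroup X] [NormedSpace ℝ X] (x c : X) {r : ℝ}
    (hr : 0 ≤ r) : infDist x (closedBall c r) = max (dist x c - r) 0 := by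
  rcases le_or_gt (dist x c) r with h | h
  · rw [infDist_zero_of_mem (mem_closedBall.2 h), max_eq_right (by linarith)]
  · have hd : 0 < dist x c := lt_of_le_of_lt hr h
    rw [max_eq_left (by linarith)]
    apply le_antisymm
    · have hy : c + (r / dist x c) • (x - c) ∈ closedBall c r := by
        rw [mem_closedBall, dist_eq_norm]
        have : c + (r / dist x c) • (x - c) - c = (r / dist x c) • (x - c) := by abel
        rw [this, norm_smul, ← dist_eq_norm, Real.norm_eq_abs,
          abs_of_nonneg (by positivity), div_mul_cancel₀ _ hd.ne']
      refine le_trans (infDist_le_dist_of_mem hy) (le_of_eq ?_)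
      rw [dist_eq_norm]
      have : x - (c + (r / dist x c) • (x - c)) = (1 - r / dist x c) • (x - c) := by
        rw [sub_smul, one_smul]; abel
      rw [this, norm_smul, Real.norm_eq_abs, ← dist_eq_norm,
        abs_of_nonneg (by rw [sub_nonneg]; exact (div_le_one hd).2 h.le), sub_mul, one_mul,
        div_mul_cancel₀ _ hd.ne']
    · by_contra hlt
      push_neg at hlt
      obtain ⟨y, hy, hdy⟩ := (infDist_lt_iff ⟨c, mem_closedBall_self hr⟩).1 hlt
      have := dist_triangle x y c
      rw [mem_closedBall] at hy
      linarith [hy, hdy]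

/-- The solution of the smallest intersecting ball problem generated by closed
balls in a Hilbert space lies in the convex hull of the centers of the active
balls. -/
theorem min_mem_convexHull_centers
    {X : Type*} [NormedAddCommGroup X] [InnerProductSpace ℝ X] [CompleteSpace X]
    (n : ℕ) (hn : 1 < n) (ω : Fin n → X) (r : Fin n → ℝ) (hr : ∀ i, 0 ≤ r i)
    (hint : (⋂ i, Metric.closedBall (ω i) (r i)) = ∅)
    (D : X → ℝ)
    (hD : D = fun x => Finset.univ.sup' (Finset.univ_nonempty_iff.2 ⟨⟨0, by omega⟩⟩)
      fun i => Metric.infDist x (Metric.closedBall (ω i) (r i)))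
    (xbar : X) (hmin : IsMinOn D Set.univ xbar) :
    xbar ∈ convexHull ℝ
      (ω '' {i | Metric.infDist xbar (Metric.closedBall (ω i) (r i)) = D xbar}) := by
  have hne : (Finset.univ : Finset (Fin n)).Nonempty := Finset.univ_nonempty_iff.2 ⟨⟨0, by omega⟩⟩
  set d : Fin n → X → ℝ := fun i x => infDist x (closedBall (ω i) (r i)) with hd
  -- D xbar > 0
  have hDpos : 0 < D xbar := by
    rcases lt_or_ge 0 (D xbar) with h | h
    · exact h
    · exfalso
      have hmem : xbar ∈ ⋂ i, closedBall (ω i) (r i) := by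
        refine Set.mem_iInter.2 fun i => ?_
        have h1 : d i xbar ≤ D xbar := by
          simp only [hD]; exact Finset.le_sup' (fun j => infDist xbar (closedBall (ω j) (r j))) (Finset.mem_univ i)
        have h2 : d i xbar = 0 := le_antisymm (h1.trans h) infDist_nonneg
        exact (isClosed_closedBall.mem_iff_infDist_zero ⟨ω i, mem_closedBall_self (hr i)⟩).2 h2
      rw [hint] at hmem; exact hmem
  -- active formula
  have hact : ∀ i, d i xbar = D xbar → dist xbar (ω i) - r i = D xbar := by
    intro i hi
    rw [hd] at hi
    simp only at hi
    rw [infDist_closedBall_eq _ _ (hr i)] at hi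
    rcases max_cases (dist xbar (ω i) - r i) 0 with ⟨h1, _⟩ | ⟨h1, _⟩
    · rw [← h1]; exact hi
    · rw [h1] at hi; linarith
  by_contra hx
  -- separation
  have hfin : (ω '' {i | d i xbar = D xbar}).Finite :=
    Set.Finite.image _ (Set.toFinite _)
  obtain ⟨f, u, hfu, hux⟩ := geometric_hahn_banach_closed_point
    (convex_convexHull ℝ _) (hfin.isClosed_convexHull (𝕜 := ℝ)) hx
  set v : X := (InnerProductSpace.toDual ℝ X).symm f with hv
  have hvf : ∀ y : X, ⟪v, y⟫ = f y := fun y => InnerProductSpace.toDual_symm_apply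
  set δ : ℝ := f xbar - u with hδ
  have hδpos : 0 < δ := by simp [hδ]; linarith
  have hkey : ∀ i, d i xbar = D xbar → δ < ⟪v, xbar - ω i⟫ := by
    intro i hi
    have : ω i ∈ convexHull ℝ (ω '' {i | d i xbar = D xbar}) :=
      subset_convexHull ℝ _ ⟨i, hi, rfl⟩
    have := hfu _ this
    rw [inner_sub_right, hvf, hvf]
    simp only [hδ]
    linarith
  -- exists an active index
  obtain ⟨i0, _, hi0⟩ := Finset.exists_mem_eq_sup' hne (fun i => d i xbar)
  have hi0act : d i0 xbar = D xbar := by simp only [hD]; exact hi0.symm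
  have hvpos : 0 < ‖v‖ := by
    rcases eq_or_ne v 0 with h | h
    · exfalso; have := hkey i0 hi0act; rw [h, inner_zero_left] at this; linarith
    · exact norm_pos_iff.2 h
  -- per-index threshold
  have key : ∀ i : Fin n, ∃ ti : ℝ, 0 < ti ∧ ∀ t : ℝ, 0 < t → t ≤ ti →
      d i (xbar - t • v) < D xbar := by
    intro i
    rcases eq_or_ne (d i xbar) (D xbar) with hi | hi
    · -- active case
      refine ⟨δ / ‖v‖ ^ 2, by positivity, fun t ht hti => ?_⟩
      have hip := hkey i hi
      have hdist := hact i hi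
      have hnorm : ‖xbar - t • v - ω i‖ < ‖xbar - ω i‖ := by
        have hexp : ‖(xbar - ω i) - t • v‖ ^ 2
            = ‖xbar - ω i‖ ^ 2 - 2 * (t * ⟪xbar - ω i, v⟫) + t ^ 2 * ‖v‖ ^ 2 := by
          rw [norm_sub_sq_real, inner_smul_right, norm_smul, Real.norm_eq_abs,
            abs_of_pos ht, mul_pow]
        have hsym : ⟪xbar - ω i, v⟫ = ⟪v, xbar - ω i⟫ := real_inner_comm _ _
        have ht2 : t ^ 2 * ‖v‖ ^ 2 ≤ t * δ := by
          have h3 : t * ‖v‖ ^ 2 ≤ δ := (le_div_iff₀ (by positivity : (0:ℝ) < ‖v‖ ^ 2)).1 hti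
          calc t ^ 2 * ‖v‖ ^ 2 = t * (t * ‖v‖ ^ 2) := by ring
            _ ≤ t * δ := by nlinarith
        have hsq : ‖(xbar - ω i) - t • v‖ ^ 2 < ‖xbar - ω i‖ ^ 2 := by
          rw [hexp, hsym]; nlinarith
        have h1 : xbar - t • v - ω i = (xbar - ω i) - t • v := by abel
        rw [h1]
        nlinarith [norm_nonneg ((xbar - ω i) - t • v), norm_nonneg (xbar - ω i)]
      rw [hd]
      simp only
      rw [infDist_closedBall_eq _ _ (hr i), dist_eq_norm]
      rw [dist_eq_norm] at hdist
      rcases max_cases (‖xbar - t • v - ω i‖ - r i) 0 with ⟨h1, _⟩ | ⟨h1, _⟩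
      · rw [h1]; linarith
      · rw [h1]; exact hDpos
    · -- inactive case
      have hle : d i xbar ≤ D xbar := by simp only [hD]; exact Finset.le_sup' (fun j => infDist xbar (closedBall (ω j) (r j))) (Finset.mem_univ i)
      have hlt : d i xbar < D xbar := lt_of_le_of_ne hle hi
      refine ⟨(D xbar - d i xbar) / (2 * ‖v‖), div_pos (by linarith) (by positivity), fun t ht hti => ?_⟩
      have hlip : d i (xbar - t • v) ≤ d i xbar + dist (xbar - t • v) xbar :=
        infDist_le_infDist_add_dist
      have hdxt : dist (xbar - t • v) xbar = t * ‖v‖ := by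
        rw [dist_eq_norm]
        have : xbar - t • v - xbar = -(t • v) := by abel
        rw [this, norm_neg, norm_smul, Real.norm_eq_abs, abs_of_pos ht]
      have : t * ‖v‖ ≤ (D xbar - d i xbar) / 2 := by
        have h3 : t * (2 * ‖v‖) ≤ D xbar - d i xbar :=
          (le_div_iff₀ (by positivity : (0:ℝ) < 2 * ‖v‖)).1 hti
        linarith
      rw [hdxt] at hlip
      linarith
  choose τ hτpos hτ using key
  set t : ℝ := Finset.univ.inf' hne τ with htdef
  have htpos : 0 < t := (Finset.lt_inf'_iff hne).2 fun i _ => hτpos i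
  have hall : ∀ i : Fin n, d i (xbar - t • v) < D xbar := fun i =>
    hτ i t htpos (Finset.inf'_le _ (Finset.mem_univ i))
  have : D (xbar - t • v) < D xbar := by
    conv_lhs => rw [hD]
    exact (Finset.sup'_lt_iff hne).2 fun i _ => hall i
  exact absurd (hmin (Set.mem_univ (xbar - t • v))) (not_le.2 this)
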